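/- arXiv:1707.09285 — 2 statements merged into one kernel-verified Lean document; each statement's English description precedes it below -/
import Mathlib

section
/- Let γ > 0, n̂ ≥ 1, and let F(u) = |u|_TV + (γ/(2m)) ‖kᵀu‖₂² be the balanced TV functional on Π(G, n̂). Let C be the convex hull of Π(G, n̂) and let F̃ : C → ℝ be any convex function with F̃(u) = F(u) for all u ∈ Π(G, n̂) (a not-necessarily-symmetric convex relaxation). Then the constant matrix J ∈ C, all of whose entries equal 1/n̂, satisfies F̃(J) ≤ F(u) for every u ∈ Π(G, n̂); that is, the trivial matrix J has an objective value at least as good as any partition matrix. -/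
open Finset

/-- The graph total variation of a function on the nodes. -/
noncomputable def graphTV {N : ℕ} (W : Matrix (Fin N) (Fin N) ℝ) (f : Fin N → ℝ) : ℝ :=
  (1 / 2) * ∑ i, ∑ j, W i j * |f i - f j|

/-- The graph total variation of a matrix: sum of the TVs of its columns. -/
noncomputable def graphTVMat {N n : ℕ} (W : Matrix (Fin N) (Fin N) ℝ)
    (u : Matrix (Fin N) (Fin n) ℝ) : ℝ :=
  ∑ ℓ, graphTV W (fun i => u i ℓ)

/-- The balanced TV functional `|u|_TV + (γ/2m) ‖kᵀu‖₂²`. -/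
noncomputable def balancedTV {N n : ℕ} (W : Matrix (Fin N) (Fin N) ℝ) (k : Fin N → ℝ)
    (twom γ : ℝ) (u : Matrix (Fin N) (Fin n) ℝ) : ℝ :=
  graphTVMat W u + (γ / twom) * ∑ ℓ, (∑ i, k i * u i ℓ) ^ 2

/-- `A` is a partition of the nodes: every node lies in exactly one part. -/
def IsPartition {N n : ℕ} (A : Fin n → Finset (Fin N)) : Prop :=
  ∀ i : Fin N, ∃! ℓ, i ∈ A ℓ

/-- The partition matrix of a partition `A`. -/
def partitionMatrix {N n : ℕ} (A : Fin n → Finset (Fin N)) :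
    Matrix (Fin N) (Fin n) ℝ :=
  fun i ℓ => if i ∈ A ℓ then 1 else 0

/-- The set `Π(G, n̂)` of partition matrices of partitions into `n̂` parts. -/
def partitionMatrices (N n : ℕ) : Set (Matrix (Fin N) (Fin n) ℝ) :=
  {u | ∃ A : Fin n → Finset (Fin N), IsPartition A ∧ u = partitionMatrix A}

/-- Row sums of a partition matrix are 1. -/
lemma partitionMatrix_row_sum {N n : ℕ} {A : Fin n → Finset (Fin N)}
    (hA : IsPartition A) (i : Fin N) : ∑ ℓ, partitionMatrix A i ℓ = 1 := by
  obtain ⟨ℓ0, h0, huniq⟩ := hA i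
  rw [Finset.sum_eq_single ℓ0]
  · simp [partitionMatrix, h0]
  · intro ℓ _ hne
    simp only [partitionMatrix, ite_eq_right_iff]
    intro hmem; exact absurd (huniq ℓ hmem) hne
  · simp

/-- Cyclic shift of a partition is a partition. -/
lemma isPartition_shift {N n : ℕ} [NeZero n] {A : Fin n → Finset (Fin N)}
    (hA : IsPartition A) (s : Fin n) : IsPartition (fun ℓ => A (ℓ - s)) := by
  intro i
  obtain ⟨ℓ0, h0, huniq⟩ := hA i
  refine ⟨ℓ0 + s, by simpa using h0, ?_⟩
  intro ℓ hmem
  have h := huniq _ hmem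
  have : ℓ = (ℓ - s) + s := (sub_add_cancel ℓ s).symm
  rw [this, h]

/-- balancedTV is invariant under column permutations. -/
lemma balancedTV_perm {N n : ℕ} (W : Matrix (Fin N) (Fin N) ℝ) (k : Fin N → ℝ)
    (twom γ : ℝ) (u : Matrix (Fin N) (Fin n) ℝ) (σ : Equiv.Perm (Fin n)) :
    balancedTV W k twom γ (fun i ℓ => u i (σ ℓ)) = balancedTV W k twom γ u := by
  unfold balancedTV graphTVMat
  congr 1
  · exact Equiv.sum_comp σ (fun ℓ => graphTV W (fun i => u i ℓ))
  · congr 1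
    exact Equiv.sum_comp σ (fun ℓ => (∑ i, k i * u i ℓ) ^ 2)

theorem nonsymmetric_convex_relaxation_trivial_value
    {N : ℕ} (hN : 1 ≤ N) (W : Matrix (Fin N) (Fin N) ℝ)
    (hWsymm : ∀ i j, W i j = W j i) (hWnonneg : ∀ i j, 0 ≤ W i j)
    (k : Fin N → ℝ) (hk : ∀ i, k i = ∑ j, W i j)
    (twom : ℝ) (htwom : twom = ∑ i, k i) (htwom_pos : 0 < twom)
    (γ : ℝ) (hγ : 0 < γ) {nhat : ℕ} (hnhat : 1 ≤ nhat)
    (C : Set (Matrix (Fin N) (Fin nhat) ℝ))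
    (hC : C = convexHull ℝ (partitionMatrices N nhat))
    (F : Matrix (Fin N) (Fin nhat) ℝ → ℝ)
    (hFconv : ConvexOn ℝ C F)
    (hFrelax : ∀ u ∈ partitionMatrices N nhat, F u = balancedTV W k twom γ u) :
    (fun (_ : Fin N) (_ : Fin nhat) => (nhat : ℝ)⁻¹) ∈ C ∧
    ∀ u ∈ partitionMatrices N nhat,
      F (fun (_ : Fin N) (_ : Fin nhat) => (nhat : ℝ)⁻¹) ≤ balancedTV W k twom γ u := by
  haveI : NeZero nhat := ⟨by omega⟩
  have hnz : (nhat : ℝ) ≠ 0 := Nat.cast_ne_zero.mpr (by omega)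
  have hw0 : ∀ s : Fin nhat, (0:ℝ) ≤ (nhat : ℝ)⁻¹ := fun _ => by positivity
  have hw1 : ∑ _s : Fin nhat, (nhat : ℝ)⁻¹ = 1 := by
    rw [Finset.sum_const, Finset.card_univ, Fintype.card_fin, nsmul_eq_mul,
      mul_inv_cancel₀ hnz]
  -- shifted matrices and the averaging identity, for any partition matrix
  have key : ∀ u ∈ partitionMatrices N nhat,
      (∀ s : Fin nhat,
        (fun i ℓ => u i (ℓ - s) : Matrix (Fin N) (Fin nhat) ℝ) ∈ partitionMatrices N nhat) ∧
      (∑ s : Fin nhat,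
          (nhat : ℝ)⁻¹ • (fun i ℓ => u i (ℓ - s) : Matrix (Fin N) (Fin nhat) ℝ))
        = (fun _ _ => (nhat : ℝ)⁻¹) := by
    rintro u ⟨A, hA, rfl⟩
    constructor
    · intro s
      exact ⟨fun ℓ => A (ℓ - s), isPartition_shift hA s, rfl⟩
    · funext i ℓ
      have hre : ∑ s : Fin nhat, partitionMatrix A i (ℓ - s)
          = ∑ ℓ', partitionMatrix A i ℓ' :=
        Fintype.sum_equiv (Equiv.subLeft ℓ) _ _ (fun s => rfl)
      have hrow := partitionMatrix_row_sum hA i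
      simp only [Finset.sum_apply, Pi.smul_apply, Matrix.smul_apply, smul_eq_mul]
      rw [← Finset.mul_sum, hre, hrow, mul_one]
  -- the trivial partition
  set A0 : Fin nhat → Finset (Fin N) := fun ℓ => if ℓ = 0 then Finset.univ else ∅ with hA0
  have hA0p : IsPartition A0 := by
    intro i
    refine ⟨0, by simp [hA0], ?_⟩
    intro ℓ hmem
    by_contra hne
    simp [hA0, hne] at hmem
  have hmemC : ∀ u ∈ partitionMatrices N nhat, ∀ s : Fin nhat,
      (fun i ℓ => u i (ℓ - s) : Matrix (Fin N) (Fin nhat) ℝ) ∈ C := by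
    intro u hu s
    rw [hC]
    exact subset_convexHull ℝ (partitionMatrices N nhat) ((key u hu).1 s)
  have hu0 : partitionMatrix A0 ∈ partitionMatrices N nhat := ⟨A0, hA0p, rfl⟩
  have hJC : (fun (_ : Fin N) (_ : Fin nhat) => (nhat : ℝ)⁻¹) ∈ C := by
    rw [← (key _ hu0).2, hC]
    exact (convex_convexHull ℝ _).sum_mem (fun s _ => hw0 s) hw1
      (fun s _ => subset_convexHull ℝ _ ((key _ hu0).1 s))
  refine ⟨hJC, ?_⟩
  rintro u hu
  have hjen := hFconv.map_sum_le (fun s _ => hw0 s) hw1 (fun s _ => hmemC u hu s)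
  erw [(key u hu).2] at hjen
  refine hjen.trans_eq ?_
  have hval : ∀ s : Fin nhat,
      F (fun i ℓ => u i (ℓ - s)) = balancedTV W k twom γ u := by
    intro s
    rw [hFrelax _ ((key u hu).1 s)]
    exact balancedTV_perm W k twom γ u (Equiv.subRight s)
  calc ∑ s : Fin nhat, (nhat : ℝ)⁻¹ * F (fun i ℓ => u i (ℓ - s))
      = ∑ _s : Fin nhat, (nhat : ℝ)⁻¹ * balancedTV W k twom γ u := by
        exact Finset.sum_congr rfl fun s _ => by rw [hval s]
    _ = balancedTV W k twom γ u := by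
        rw [← Finset.sum_mul, hw1, one_mul]
end

section
/- Let M be a real symmetric positive semidefinite N×N matrix with ℓ²-operator norm (spectral radius) ρ > 0. Let v₀ ∈ {−1, 1}^N and v(τ) = exp(−τ M) v₀. If 0 ≤ τ < ρ^{−1} log(1 + N^{−1/2}), then v(τ)_i has the same (strict) sign as (v₀)_i for every i: (v₀)_i · v(τ)_i > 0. Consequently, for two communities the MBO iteration is guaranteed to be stationary for any timestep below this bound. -/
open Finset Matrix

open Nat in
lemma my_norm_exp_sub_one_le {𝔸 : Type*} [NormedRing 𝔸] [NormedAlgebra ℝ 𝔸] [CompleteSpace 𝔸]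
    (x : 𝔸) : ‖NormedSpace.exp x - 1‖ ≤ Real.exp ‖x‖ - 1 := by
  have hf : Summable (fun n : ℕ => (n !⁻¹ : ℝ) • x ^ n) := NormedSpace.expSeries_summable' x
  have hg : Summable (fun n : ℕ => ‖x‖ ^ n / n !) := Real.summable_pow_div_factorial ‖x‖
  have hg1 : Summable (fun n : ℕ => ‖x‖ ^ (n + 1) / (n + 1)!) := (summable_nat_add_iff 1).2 hg
  have hxe : Real.exp ‖x‖ = ∑' n : ℕ, ‖x‖ ^ n / n ! := by
    rw [Real.exp_eq_exp_ℝ, NormedSpace.exp_eq_tsum_div]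
  have hxe1 : Real.exp ‖x‖ = 1 + ∑' n : ℕ, ‖x‖ ^ (n + 1) / (n + 1)! := by
    rw [hxe, Summable.tsum_eq_zero_add hg]; norm_num
  have hexp : NormedSpace.exp x - 1 = ∑' n : ℕ, (((n + 1)!⁻¹ : ℝ)) • x ^ (n + 1) := by
    rw [NormedSpace.exp_eq_tsum ℝ]
    rw [show (fun x : 𝔸 => ∑' n : ℕ, (n !⁻¹ : ℝ) • x ^ n) x
        = ∑' n : ℕ, (n !⁻¹ : ℝ) • x ^ n from rfl, Summable.tsum_eq_zero_add hf]
    simp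
  rw [hexp, hxe1, add_sub_cancel_left]
  refine tsum_of_norm_bounded hg1.hasSum fun n => ?_
  rw [norm_smul, Real.norm_eq_abs, abs_of_nonneg (by positivity), div_eq_inv_mul]
  exact mul_le_mul_of_nonneg_left (norm_pow_le' x n.succ_pos) (by positivity)

lemma my_coord_le_norm {N : ℕ} (x : EuclideanSpace ℝ (Fin N)) (i : Fin N) : |x i| ≤ ‖x‖ := by
  rw [EuclideanSpace.norm_eq]
  have h1 : |x i| = Real.sqrt (‖x i‖ ^ 2) := by
    rw [Real.sqrt_sq_eq_abs, Real.norm_eq_abs, abs_abs]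
  rw [h1]
  exact Real.sqrt_le_sqrt (Finset.single_le_sum (f := fun j => ‖x j‖ ^ 2) (fun j _ => by positivity) (Finset.mem_univ i))

theorem mbo_stationary_spectral_bound
    {N : ℕ}
    (M : Matrix (Fin N) (Fin N) ℝ) (hMpsd : M.PosSemidef)
    (ρ : ℝ)
    (hρ : ρ = ‖LinearMap.toContinuousLinearMap (Matrix.toEuclideanLin M)‖)
    (hρpos : 0 < ρ)
    (v₀ : Fin N → ℝ) (hv₀ : ∀ i, v₀ i = 1 ∨ v₀ i = -1)
    (τ : ℝ) (hτ : 0 ≤ τ)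
    (hτlt : τ < ρ⁻¹ * Real.log (1 + (Real.sqrt N)⁻¹)) :
    ∀ i, 0 < v₀ i * (NormedSpace.exp (-(τ • M))).mulVec v₀ i := by
  intro i
  have hN : 0 < N := i.pos
  have hsqN : (1:ℝ) ≤ Real.sqrt N := by
    rw [show (1:ℝ) = Real.sqrt 1 by simp]
    exact Real.sqrt_le_sqrt (by exact_mod_cast hN)
  have hsqpos : (0:ℝ) < Real.sqrt N := lt_of_lt_of_le one_pos hsqN
  set T : EuclideanSpace ℝ (Fin N) →L[ℝ] EuclideanSpace ℝ (Fin N) :=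
    Matrix.toEuclideanCLM (𝕜 := ℝ) M with hTdef
  have hTnorm : ‖T‖ = ρ := by rw [hρ]; rfl
  have hkey : Matrix.toEuclideanCLM (𝕜 := ℝ) (NormedSpace.exp (-(τ • M)))
      = NormedSpace.exp (-(τ • T)) := by
    open scoped Matrix.Norms.L2Operator in
    (letI : NormedAlgebra ℚ (Matrix (Fin N) (Fin N) ℝ) := NormedAlgebra.restrictScalars ℚ ℝ _
     rw [NormedSpace.map_exp (Matrix.toEuclideanCLM (𝕜 := ℝ) (n := Fin N))
      (LinearMap.continuous_of_finiteDimensional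
        ((Matrix.toEuclideanLin.trans LinearMap.toContinuousLinearMap
          : Matrix (Fin N) (Fin N) ℝ ≃ₗ[ℝ] _)).toLinearMap) (-(τ • M))])
    congr 1
    simp [hTdef, _root_.map_smul]
  set u : EuclideanSpace ℝ (Fin N) := (WithLp.equiv 2 (Fin N → ℝ)).symm v₀ with hudef
  have hu : ‖u‖ = Real.sqrt N := by
    have hone : ∀ j : Fin N, u j ^ 2 = 1 := by
      intro j
      rcases hv₀ j with h | h <;>
        simp [hudef, WithLp.equiv_symm_apply, PiLp.toLp_apply, h]
    have hsum : ∑ j : Fin N, ‖u j‖ ^ 2 = (N : ℝ) := by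
      simp only [Real.norm_eq_abs, sq_abs]
      simp [hone]
    rw [EuclideanSpace.norm_eq, hsum]
  have hτρ : τ * ρ < Real.log (1 + (Real.sqrt N)⁻¹) := by
    have := mul_lt_mul_of_pos_right hτlt hρpos
    calc τ * ρ < ρ⁻¹ * Real.log (1 + (Real.sqrt N)⁻¹) * ρ := this
      _ = Real.log (1 + (Real.sqrt N)⁻¹) := by field_simp
  have hlt : Real.exp (τ * ρ) - 1 < (Real.sqrt N)⁻¹ := by
    have h1 : (0:ℝ) < 1 + (Real.sqrt N)⁻¹ := by positivity
    have h2 : Real.exp (τ * ρ) < 1 + (Real.sqrt N)⁻¹ := by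
      calc Real.exp (τ * ρ) < Real.exp (Real.log (1 + (Real.sqrt N)⁻¹)) := Real.exp_lt_exp.2 hτρ
        _ = 1 + (Real.sqrt N)⁻¹ := Real.exp_log h1
    linarith
  have hexpnorm : ‖NormedSpace.exp (-(τ • T)) - 1‖ ≤ Real.exp (τ * ρ) - 1 := by
    refine le_trans (my_norm_exp_sub_one_le _) ?_
    have : ‖-(τ • T)‖ = τ * ρ := by
      rw [norm_neg, norm_smul τ T, Real.norm_eq_abs, abs_of_nonneg hτ, hTnorm]
    rw [this]
  set d : EuclideanSpace ℝ (Fin N) := NormedSpace.exp (-(τ • T)) u - u with hddef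
  have hdnorm : ‖d‖ < 1 := by
    have h0 : d = (NormedSpace.exp (-(τ • T)) - 1) u := by
      simp [hddef, ContinuousLinearMap.sub_apply]
    calc ‖d‖ = ‖(NormedSpace.exp (-(τ • T)) - 1) u‖ := by rw [h0]
      _ ≤ ‖NormedSpace.exp (-(τ • T)) - 1‖ * ‖u‖ := ContinuousLinearMap.le_opNorm _ _
      _ ≤ (Real.exp (τ * ρ) - 1) * Real.sqrt N := by
          rw [hu]; exact mul_le_mul_of_nonneg_right hexpnorm hsqpos.le
      _ < (Real.sqrt N)⁻¹ * Real.sqrt N := mul_lt_mul_of_pos_right hlt hsqpos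
      _ = 1 := inv_mul_cancel₀ hsqpos.ne'
  have hcomp : (NormedSpace.exp (-(τ • M))).mulVec v₀ i
      = NormedSpace.exp (-(τ • T)) u i := by
    rw [← hkey, hudef]
    rw [WithLp.equiv_symm_apply, Matrix.toEuclideanCLM_toLp]
  have hui : u i = v₀ i := rfl
  have hdi : |d i| ≤ ‖d‖ := my_coord_le_norm d i
  have hdi1 : |d i| < 1 := lt_of_le_of_lt hdi hdnorm
  have hvabs : |v₀ i| = 1 := by rcases hv₀ i with h | h <;> simp [h]
  have hexpi : NormedSpace.exp (-(τ • T)) u i = v₀ i + d i := by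
    simp [hddef, hui]
  rw [hcomp, hexpi]
  have hsq : v₀ i * v₀ i = 1 := by rcases hv₀ i with h | h <;> rw [h] <;> norm_num
  have habs : |v₀ i * d i| < 1 := by rw [abs_mul, hvabs, one_mul]; exact hdi1
  have := abs_lt.1 habs
  calc (0:ℝ) < 1 + v₀ i * d i := by linarith [this.1]
    _ = v₀ i * (v₀ i + d i) := by rw [mul_add, hsq]
end
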